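/- Let A be an MV-algebra. The map φ_A : A → [0, u] ⊆ G_A sending a to the class [(a),(0)], where (a) is the good sequence (a, 0, 0, …), is an isomorphism of MV-algebras between A and the unit interval MV-algebra of the ℓ-group with strong unit G_A associated to A. -/

import Mathlib

class MVAlgebra (A : Type*) extends Zero A where
  oplus : A → A → A
  mvneg : A → A
  oplus_assoc : ∀ x y z : A, oplus x (oplus y z) = oplus (oplus x y) z
  oplus_comm : ∀ x y : A, oplus x y = oplus y x
  oplus_zero : ∀ x : A, oplus x 0 = x
  mvneg_mvneg : ∀ x : A, mvneg (mvneg x) = x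
  oplus_mvneg_zero : ∀ x : A, oplus x (mvneg 0) = mvneg 0
  lukasiewicz : ∀ x y : A,
    oplus (mvneg (oplus (mvneg x) y)) y = oplus (mvneg (oplus (mvneg y) x)) x

open MVAlgebra

/-- The derived operation `x ⊙ y := ¬(¬x ⊕ ¬y)`. -/
def MVAlgebra.odot {A : Type*} [MVAlgebra A] (x y : A) : A :=
  mvneg (oplus (mvneg x) (mvneg y))

/-- A good sequence: `aᵢ ⊕ aᵢ₊₁ = aᵢ` for all `i`, and eventually zero. -/
def Good {A : Type*} [MVAlgebra A] (a : ℕ → A) : Prop :=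
  (∀ i, oplus (a i) (a (i + 1)) = a i) ∧ ∃ N, ∀ m, N ≤ m → a m = 0

/-- The sum of (good) sequences:
`(a + b)ₙ = aₙ ⊕ (aₙ₋₁ ⊙ b₀) ⊕ … ⊕ (a₀ ⊙ bₙ₋₁) ⊕ bₙ`. -/
def addGood {A : Type*} [MVAlgebra A] (a b : ℕ → A) : ℕ → A := fun n =>
  ((List.range n).map (fun j => odot (a (n - 1 - j)) (b j))).foldr oplus
    (oplus (a n) (b n))

/-- The natural order of an MV-algebra: `x ≤ y` iff `¬x ⊕ y = ¬0`. -/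
def MVLe {A : Type*} [MVAlgebra A] (x y : A) : Prop :=
  oplus (mvneg x) y = mvneg 0

/-- The lattice infimum for the natural order: `inf(x,y) = x ⊙ (¬x ⊕ y)`. -/
def MVInf {A : Type*} [MVAlgebra A] (x y : A) : A := odot x (oplus (mvneg x) y)

/-- Pointwise order on sequences. -/
def SeqLe {A : Type*} [MVAlgebra A] (a b : ℕ → A) : Prop :=
  ∀ i, MVLe (a i) (b i)

/-- The zero good sequence. -/
def zeroSeq (A : Type*) [MVAlgebra A] : ℕ → A := fun _ => 0

/-- The good sequence `(1) = (¬0, 0, 0, …)`. -/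
def oneSeq (A : Type*) [MVAlgebra A] : ℕ → A := fun i =>
  if i = 0 then mvneg 0 else 0

/-- The good sequence `(a) = (a, 0, 0, …)`. -/
def single {A : Type*} [MVAlgebra A] (a : A) : ℕ → A := fun i =>
  if i = 0 then a else 0

/-- Equality in the Grothendieck group `G_A`, on representing pairs:
`[a,b] = [c,d]` iff `a + d = c + b`. -/
def PairEq {A : Type*} [MVAlgebra A] (p q : (ℕ → A) × (ℕ → A)) : Prop :=
  addGood p.1 q.2 = addGood q.1 p.2

/-- The order on `G_A` on representing pairs: `[a,b] ≤ [c,d]` iff `a + d ≤ c + b`. -/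
def PairLe {A : Type*} [MVAlgebra A] (p q : (ℕ → A) × (ℕ → A)) : Prop :=
  SeqLe (addGood p.1 q.2) (addGood q.1 p.2)

/-- Addition in `G_A` on representing pairs. -/
def pairAdd {A : Type*} [MVAlgebra A] (p q : (ℕ → A) × (ℕ → A)) :
    (ℕ → A) × (ℕ → A) :=
  (addGood p.1 q.1, addGood p.2 q.2)

/-- The lattice infimum in `G_A` on representing pairs:
`inf([a,b],[c,d]) = [inf(a+d, c+b), b+d]` (with componentwise `inf`). -/
def pairInf {A : Type*} [MVAlgebra A] (p q : (ℕ → A) × (ℕ → A)) :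
    (ℕ → A) × (ℕ → A) :=
  (fun i => MVInf (addGood p.1 q.2 i) (addGood q.1 p.2 i), addGood p.2 q.2)

section Toolkit
variable {A : Type*} [MVAlgebra A]

local infixl:65 " ⊕ₘ " => MVAlgebra.oplus
local prefix:max "¬ₘ" => MVAlgebra.mvneg
local infixl:70 " ⊙ₘ " => MVAlgebra.odot

lemma MV.zero_oplus (x : A) : (0 : A) ⊕ₘ x = x := by
  rw [oplus_comm, oplus_zero]

lemma MV.one_oplus (x : A) : ¬ₘ(0 : A) ⊕ₘ x = ¬ₘ0 := by
  rw [oplus_comm, oplus_mvneg_zero]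

lemma MV.neg_inj {x y : A} (h : ¬ₘx = ¬ₘy) : x = y := by
  have := congrArg MVAlgebra.mvneg h
  rwa [mvneg_mvneg, mvneg_mvneg] at this

/-- `¬x ⊕ x = 1`. -/
lemma MV.neg_oplus_self (x : A) : ¬ₘx ⊕ₘ x = ¬ₘ0 := by
  have h := lukasiewicz (¬ₘ(0:A)) x
  rwa [mvneg_mvneg, MV.zero_oplus, oplus_mvneg_zero] at h

lemma MV.oplus_neg_self (x : A) : x ⊕ₘ ¬ₘx = ¬ₘ0 := by
  rw [oplus_comm]; exact MV.neg_oplus_self x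

lemma MV.odot_def (x y : A) : x ⊙ₘ y = ¬ₘ(¬ₘx ⊕ₘ ¬ₘy) := rfl

lemma MV.neg_odot (x y : A) : ¬ₘ(x ⊙ₘ y) = ¬ₘx ⊕ₘ ¬ₘy := by
  rw [MV.odot_def, mvneg_mvneg]

lemma MV.neg_oplus (x y : A) : ¬ₘ(x ⊕ₘ y) = ¬ₘx ⊙ₘ ¬ₘy := by
  rw [MV.odot_def, mvneg_mvneg, mvneg_mvneg]

lemma MV.odot_comm (x y : A) : x ⊙ₘ y = y ⊙ₘ x := by
  rw [MV.odot_def, MV.odot_def, oplus_comm]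

lemma MV.odot_assoc (x y z : A) : x ⊙ₘ (y ⊙ₘ z) = (x ⊙ₘ y) ⊙ₘ z := by
  rw [MV.odot_def, MV.odot_def, MV.odot_def, MV.odot_def, mvneg_mvneg,
    mvneg_mvneg, oplus_assoc]

lemma MV.odot_zero (x : A) : x ⊙ₘ (0 : A) = 0 := by
  rw [MV.odot_def, oplus_mvneg_zero, mvneg_mvneg]

lemma MV.zero_odot (x : A) : (0 : A) ⊙ₘ x = 0 := by
  rw [MV.odot_comm, MV.odot_zero]

lemma MV.odot_one (x : A) : x ⊙ₘ ¬ₘ(0 : A) = x := by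
  rw [MV.odot_def, mvneg_mvneg, oplus_zero, mvneg_mvneg]

lemma MV.one_odot (x : A) : ¬ₘ(0 : A) ⊙ₘ x = x := by
  rw [MV.odot_comm, MV.odot_one]

end Toolkit
section Toolkit2
variable {A : Type*} [MVAlgebra A]

lemma MV.le_self_oplus (x z : A) : MVLe x (oplus x z) := by
  show oplus (mvneg x) (oplus x z) = mvneg 0
  rw [oplus_assoc, MV.neg_oplus_self, MV.one_oplus]

lemma MV.le_oplus_left (x z : A) : MVLe x (oplus z x) := by
  rw [oplus_comm]; exact MV.le_self_oplus x z

lemma MV.le_iff_exists {x y : A} : MVLe x y ↔ ∃ z, y = oplus x z := by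
  constructor
  · intro h
    refine ⟨mvneg (oplus (mvneg y) x), ?_⟩
    have hl := lukasiewicz x y
    rw [show oplus (mvneg x) y = mvneg 0 from h, mvneg_mvneg, MV.zero_oplus] at hl
    rw [oplus_comm]
    exact hl
  · rintro ⟨z, rfl⟩; exact MV.le_self_oplus x z

lemma MV.le_refl (x : A) : MVLe x x := MV.neg_oplus_self x

lemma MV.zero_le (x : A) : MVLe (0 : A) x := by
  show oplus (mvneg 0) x = mvneg 0; exact MV.one_oplus x

lemma MV.le_one (x : A) : MVLe x (mvneg 0) := oplus_mvneg_zero (mvneg x)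

lemma MV.le_trans {x y z : A} (h1 : MVLe x y) (h2 : MVLe y z) : MVLe x z := by
  rw [MV.le_iff_exists] at h1 h2 ⊢
  obtain ⟨s, rfl⟩ := h1; obtain ⟨t, rfl⟩ := h2
  exact ⟨oplus s t, (oplus_assoc x s t).symm⟩

lemma MV.le_antisymm {x y : A} (h1 : MVLe x y) (h2 : MVLe y x) : x = y := by
  have hl := lukasiewicz x y
  rw [show oplus (mvneg x) y = mvneg 0 from h1,
    show oplus (mvneg y) x = mvneg 0 from h2, mvneg_mvneg, MV.zero_oplus,
    MV.zero_oplus] at hl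
  exact hl.symm

lemma MV.le_zero_eq {x : A} (h : MVLe x 0) : x = 0 :=
  MV.le_antisymm h (MV.zero_le x)

lemma MV.oplus_le_oplus_left {x y : A} (h : MVLe x y) (c : A) :
    MVLe (oplus x c) (oplus y c) := by
  rw [MV.le_iff_exists] at h ⊢
  obtain ⟨s, rfl⟩ := h
  exact ⟨s, by rw [← oplus_assoc, oplus_comm s c, oplus_assoc]⟩

lemma MV.oplus_le_oplus_right {x y : A} (h : MVLe x y) (c : A) :
    MVLe (oplus c x) (oplus c y) := by
  rw [oplus_comm c x, oplus_comm c y]; exact MV.oplus_le_oplus_left h c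

lemma MV.oplus_le_oplus {x y u v : A} (h1 : MVLe x y) (h2 : MVLe u v) :
    MVLe (oplus x u) (oplus y v) :=
  MV.le_trans (MV.oplus_le_oplus_left h1 u) (MV.oplus_le_oplus_right h2 y)

lemma MV.neg_le_neg {x y : A} (h : MVLe x y) : MVLe (mvneg y) (mvneg x) := by
  show oplus (mvneg (mvneg y)) (mvneg x) = mvneg 0
  rw [mvneg_mvneg, oplus_comm]
  exact h

lemma MV.odot_le_odot_left {x y : A} (h : MVLe x y) (c : A) :
    MVLe (odot x c) (odot y c) := by
  show MVLe (mvneg (oplus (mvneg x) (mvneg c))) (mvneg (oplus (mvneg y) (mvneg c)))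
  exact MV.neg_le_neg (MV.oplus_le_oplus_left (MV.neg_le_neg h) (mvneg c))

lemma MV.odot_le_odot_right {x y : A} (h : MVLe x y) (c : A) :
    MVLe (odot c x) (odot c y) := by
  rw [MV.odot_comm c x, MV.odot_comm c y]; exact MV.odot_le_odot_left h c

lemma MV.odot_le_right (x y : A) : MVLe (odot x y) y := by
  have := MV.odot_le_odot_left (MV.le_one x) y
  rwa [MV.one_odot] at this

lemma MV.odot_le_left (x y : A) : MVLe (odot x y) x := by
  rw [MV.odot_comm]; exact MV.odot_le_right y x

lemma MV.inf_comm_raw (x y : A) :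
    odot x (oplus (mvneg x) y) = odot y (oplus (mvneg y) x) := by
  have hl := lukasiewicz (mvneg y) (mvneg x)
  rw [mvneg_mvneg, mvneg_mvneg, oplus_comm y (mvneg x), oplus_comm x (mvneg y)] at hl
  show mvneg (oplus (mvneg x) (mvneg (oplus (mvneg x) y)))
      = mvneg (oplus (mvneg y) (mvneg (oplus (mvneg y) x)))
  rw [oplus_comm (mvneg x), oplus_comm (mvneg y), hl]

lemma MV.inf_le_right_raw (x y : A) : MVLe (odot x (oplus (mvneg x) y)) y := by
  show oplus (mvneg (odot x (oplus (mvneg x) y))) y = mvneg 0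
  rw [MV.neg_odot, oplus_comm (mvneg x), ← oplus_assoc, MV.neg_oplus_self]

lemma MV.inf_eq_of_le {x y : A} (h : MVLe y x) : odot x (oplus (mvneg x) y) = y := by
  rw [MV.inf_comm_raw, show oplus (mvneg y) x = mvneg 0 from h, MV.odot_one]

lemma MV.res_forward {x y z : A} (h : MVLe (odot x y) z) :
    MVLe x (oplus (mvneg y) z) := by
  have hl := lukasiewicz x (mvneg y)
  rw [mvneg_mvneg] at hl
  have h1 : MVLe x (oplus (odot x y) (mvneg y)) := by
    show MVLe x (oplus (mvneg (oplus (mvneg x) (mvneg y))) (mvneg y))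
    rw [hl]; exact MV.le_oplus_left x (mvneg (oplus y x))
  exact MV.le_trans h1
    (by rw [oplus_comm (mvneg y) z]; exact MV.oplus_le_oplus_left h (mvneg y))

lemma MV.res_backward {x y z : A} (h : MVLe x (oplus (mvneg y) z)) :
    MVLe (odot x y) z := by
  have h1 : MVLe (odot x y) (odot (oplus (mvneg y) z) y) := MV.odot_le_odot_left h y
  rw [MV.odot_comm (oplus (mvneg y) z) y] at h1
  exact MV.le_trans h1 (MV.inf_le_right_raw y z)

lemma MV.odot_eq_zero_iff {x y : A} : odot x y = 0 ↔ MVLe x (mvneg y) := by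
  show mvneg (oplus (mvneg x) (mvneg y)) = 0 ↔ oplus (mvneg x) (mvneg y) = mvneg 0
  constructor
  · intro h
    have := congrArg MVAlgebra.mvneg h
    rwa [mvneg_mvneg] at this
  · intro h; rw [h, mvneg_mvneg]

lemma MV.goodPair_odot {u v : A} (h : oplus u v = u) : odot v u = v := by
  have hvu : MVLe v u := by
    have := MV.le_oplus_left v u
    rwa [h] at this
  have step2 : oplus (odot v u) (mvneg u) = oplus (mvneg u) v := by
    have hl := lukasiewicz v (mvneg u)
    rw [mvneg_mvneg] at hl
    show oplus (mvneg (oplus (mvneg v) (mvneg u))) (mvneg u) = oplus (mvneg u) v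
    rw [hl, h]
  have step3 : odot u (oplus (mvneg u) (odot v u)) = odot u (oplus (mvneg u) v) := by
    rw [oplus_comm (mvneg u) (odot v u), step2]
  rw [MV.inf_eq_of_le (MV.odot_le_right v u), MV.inf_eq_of_le hvu] at step3
  exact step3

lemma MV.cancel {x y : A} (h : odot x y = 0) : odot (oplus x y) (mvneg y) = x := by
  have hl := lukasiewicz (mvneg x) y
  rw [mvneg_mvneg] at hl
  show mvneg (oplus (mvneg (oplus x y)) (mvneg (mvneg y))) = x
  rw [mvneg_mvneg, hl, MV.odot_comm x y] at *
  rw [show mvneg (oplus (mvneg y) (mvneg x)) = odot y x from rfl, h, MV.zero_oplus,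
    mvneg_mvneg]

lemma MV.star3 {d a y : A} (h1 : odot d a = 0) (h2 : odot d y = 0) :
    odot (oplus d a) y = odot a (oplus d y) := by
  have hy : odot (oplus y d) (mvneg d) = y := MV.cancel (by rw [MV.odot_comm]; exact h2)
  have ha : odot (oplus a d) (mvneg d) = a := MV.cancel (by rw [MV.odot_comm]; exact h1)
  calc odot (oplus d a) y = odot (oplus d a) (odot (oplus y d) (mvneg d)) := by rw [hy]
    _ = odot (odot (oplus d a) (mvneg d)) (oplus y d) := by
        rw [MV.odot_comm (oplus y d) (mvneg d), MV.odot_assoc]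
    _ = odot a (oplus d y) := by
        rw [oplus_comm d a, ha, oplus_comm y d]

lemma MV.star2 {p q r : A} (h : odot q (oplus p r) = 0) :
    odot (oplus p q) r = odot p r := by
  have hq : MVLe q (mvneg (oplus p r)) := MV.odot_eq_zero_iff.mp h
  have hle : MVLe (odot (oplus p q) r) (odot p r) := by
    apply MV.res_backward
    have key : oplus p (mvneg (oplus p r)) = oplus (mvneg r) (odot p r) := by
      have hl := lukasiewicz (mvneg r) p
      rw [mvneg_mvneg] at hl
      rw [oplus_comm p (mvneg (oplus p r)), oplus_comm p r]
      show oplus (mvneg (oplus r p)) p = oplus (mvneg r) (odot p r)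
      rw [hl, oplus_comm]
      rfl
    rw [← key]
    exact MV.oplus_le_oplus_right hq p
  exact MV.le_antisymm hle (MV.odot_le_odot_left (MV.le_self_oplus p q) r)

lemma MV.sub_oplus {x y : A} (h : MVLe y x) :
    oplus (mvneg (oplus (mvneg x) y)) y = x := by
  rw [lukasiewicz x y, show oplus (mvneg y) x = mvneg 0 from h, mvneg_mvneg,
    MV.zero_oplus]

lemma MV.sub_odot (x y : A) : odot (mvneg (oplus (mvneg x) y)) y = 0 := by
  have : mvneg (oplus (mvneg x) y) = odot x (mvneg y) := by
    show _ = mvneg (oplus (mvneg x) (mvneg (mvneg y)))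
    rw [mvneg_mvneg]
  rw [this, ← MV.odot_assoc]
  have : odot (mvneg y) y = 0 := by
    show mvneg (oplus (mvneg (mvneg y)) (mvneg y)) = 0
    rw [mvneg_mvneg, MV.oplus_neg_self, mvneg_mvneg]
  rw [this, MV.odot_zero]

end Toolkit2
section Toolkit3
variable {A : Type*} [MVAlgebra A]

lemma MV.foldr_all_zero (l : List A) (init : A) (h : ∀ t ∈ l, t = (0 : A)) :
    l.foldr oplus init = init := by
  induction l with
  | nil => rfl
  | cons hd tl ih =>
    rw [List.foldr_cons, h hd List.mem_cons_self,
      ih (fun t ht => h t (List.mem_cons_of_mem hd ht)), MV.zero_oplus]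

lemma MV.addGood_zero_right (a : ℕ → A) (n : ℕ) : addGood a (zeroSeq A) n = a n := by
  unfold addGood
  rw [MV.foldr_all_zero]
  · show oplus (a n) 0 = a n; exact oplus_zero (a n)
  · intro t ht
    obtain ⟨j, _, rfl⟩ := List.mem_map.mp ht
    exact MV.odot_zero _

lemma MV.addGood_zero_left (b : ℕ → A) (n : ℕ) : addGood (zeroSeq A) b n = b n := by
  unfold addGood
  rw [MV.foldr_all_zero]
  · show oplus 0 (b n) = b n; exact MV.zero_oplus (b n)
  · intro t ht
    obtain ⟨j, _, rfl⟩ := List.mem_map.mp ht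
    exact MV.zero_odot _

lemma MV.addGood_single_zero (v : A) (b : ℕ → A) :
    addGood (single v) b 0 = oplus v (b 0) := rfl

lemma MV.addGood_single_succ (v : A) (b : ℕ → A) (m : ℕ) :
    addGood (single v) b (m + 1) = oplus (odot v (b m)) (b (m + 1)) := by
  unfold addGood
  rw [List.range_succ, List.map_append, List.foldr_append]
  rw [MV.foldr_all_zero]
  · show oplus (odot (single v (m + 1 - 1 - m)) (b m))
        (oplus (single v (m + 1)) (b (m + 1))) = _
    have h1 : m + 1 - 1 - m = 0 := by omega
    have h2 : single v (m + 1) = (0 : A) := by simp [single]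
    rw [h1, h2, MV.zero_oplus]
    rfl
  · intro t ht
    obtain ⟨j, hj, rfl⟩ := List.mem_map.mp ht
    rw [List.mem_range] at hj
    have : single v (m + 1 - 1 - j) = (0 : A) := by
      show (if m + 1 - 1 - j = 0 then v else 0) = 0
      rw [if_neg (by omega : ¬ (m + 1 - 1 - j = 0))]
    rw [this, MV.zero_odot]

lemma MV.oneSeq_eq_single : oneSeq A = single (mvneg 0) := rfl

lemma MV.addGood_one_zero (b : ℕ → A) : addGood (oneSeq A) b 0 = mvneg 0 := by
  rw [MV.oneSeq_eq_single, MV.addGood_single_zero, MV.one_oplus]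

lemma MV.addGood_one_succ (b : ℕ → A) (m : ℕ) :
    addGood (oneSeq A) b (m + 1) = oplus (b m) (b (m + 1)) := by
  rw [MV.oneSeq_eq_single, MV.addGood_single_succ, MV.one_odot]

lemma MV.good_step {y : ℕ → A} (hg : ∀ i, oplus (y i) (y (i + 1)) = y i) (m : ℕ) :
    MVLe (y (m + 1)) (y m) := by
  have := MV.le_oplus_left (y (m + 1)) (y m)
  rwa [hg m] at this

lemma MV.good_le_one {y : ℕ → A} (hg : ∀ i, oplus (y i) (y (i + 1)) = y i) :
    ∀ n, MVLe (y (n + 1)) (y 1) := by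
  intro n
  induction n with
  | zero => exact MV.le_refl _
  | succ k ih => exact MV.le_trans (MV.good_step hg (k + 1)) ih

/-- The key induction: subtraction of good sequences in the unit interval. -/
lemma MV.key : ∀ (N : ℕ) (x y : ℕ → A),
    (∀ i, oplus (x i) (x (i + 1)) = x i) →
    (∀ i, oplus (y i) (y (i + 1)) = y i) →
    (∀ m, N ≤ m → y m = 0) →
    (∀ i, MVLe (y i) (x i)) →
    (∀ n, MVLe (x (n + 1)) (y n)) →
    ∃ a : A, x 0 = oplus a (y 0) ∧
      ∀ n, x (n + 1) = oplus (odot a (y n)) (y (n + 1)) := by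
  intro N
  induction N with
  | zero =>
    intro x y hgx hgy hvan hle hle2
    refine ⟨x 0, ?_, ?_⟩
    · rw [hvan 0 (Nat.le_refl 0), oplus_zero]
    · intro n
      have hx : x (n + 1) = 0 := by
        have := hle2 n
        rw [hvan n (Nat.zero_le n)] at this
        exact MV.le_zero_eq this
      rw [hx, hvan n (Nat.zero_le n), hvan (n + 1) (Nat.zero_le _), MV.odot_zero,
        oplus_zero]
  | succ N ih =>
    intro x y hgx hgy hvan hle hle2
    obtain ⟨a', ha0, ha⟩ := ih (fun i => x (i + 1)) (fun i => y (i + 1))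
      (fun i => hgx (i + 1)) (fun i => hgy (i + 1))
      (fun m hm => hvan (m + 1) (Nat.succ_le_succ hm))
      (fun i => hle (i + 1)) (fun n => hle2 (n + 1))
    set d := mvneg (oplus (mvneg (x 0)) (y 0)) with hd
    refine ⟨oplus d a', ?_, ?_⟩
    · -- x 0 = (d ⊕ a') ⊕ y 0
      have ha'x1 : MVLe a' (x 1) := by
        have := MV.le_self_oplus a' (y 1)
        rwa [← ha0] at this
      have hx0a' : oplus (x 0) a' = x 0 := by
        apply MV.le_antisymm
        · exact MV.le_trans (MV.oplus_le_oplus_right ha'x1 (x 0))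
            (by rw [hgx 0]; exact MV.le_refl _)
        · exact MV.le_self_oplus (x 0) a'
      have hdy0 : oplus d (y 0) = x 0 := MV.sub_oplus (hle 0)
      rw [← oplus_assoc, oplus_comm a' (y 0), oplus_assoc, hdy0, hx0a']
    · intro n
      have ha'x1 : MVLe a' (x 1) := by
        have := MV.le_self_oplus a' (y 1)
        rwa [← ha0] at this
      have ha'y0 : MVLe a' (y 0) := MV.le_trans ha'x1 (hle2 0)
      have hdy0 : odot d (y 0) = 0 := MV.sub_odot (x 0) (y 0)
      have hda' : odot d a' = 0 :=
        MV.le_zero_eq (by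
          have := MV.odot_le_odot_right ha'y0 d
          rwa [hdy0] at this)
      cases n with
      | zero =>
        -- x 1 = ((d ⊕ a') ⊙ y 0) ⊕ y 1
        have hdy0sum : oplus d (y 0) = x 0 := MV.sub_oplus (hle 0)
        have hx0a' : oplus (x 0) a' = x 0 := by
          apply MV.le_antisymm
          · exact MV.le_trans (MV.oplus_le_oplus_right ha'x1 (x 0))
              (by rw [hgx 0]; exact MV.le_refl _)
          · exact MV.le_self_oplus (x 0) a'
        have : odot (oplus d a') (y 0) = a' := by
          rw [MV.star3 hda' hdy0, hdy0sum, MV.goodPair_odot hx0a']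
        rw [this]
        exact ha0
      | succ n =>
        -- x (n+2) = ((d ⊕ a') ⊙ y (n+1)) ⊕ y (n+2)
        have hsum_le : MVLe (oplus a' (y (n + 1))) (y 0) := by
          have h1 : MVLe (oplus a' (y (n + 1))) (oplus (y 0) (y 1)) :=
            MV.oplus_le_oplus ha'y0 (MV.good_le_one hgy n)
          rwa [hgy 0] at h1
        have hcond : odot d (oplus a' (y (n + 1))) = 0 :=
          MV.le_zero_eq (by
            have := MV.odot_le_odot_right hsum_le d
            rwa [hdy0] at this)
        have : odot (oplus d a') (y (n + 1)) = odot a' (y (n + 1)) := by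
          rw [oplus_comm d a']
          exact MV.star2 hcond
        rw [this]
        exact ha n

end Toolkit3
section Toolkit4
variable {A : Type*} [MVAlgebra A]

lemma MV.neg_odot_self (y : A) : odot (mvneg y) y = 0 := by
  show mvneg (oplus (mvneg (mvneg y)) (mvneg y)) = 0
  rw [mvneg_mvneg, MV.oplus_neg_self, mvneg_mvneg]

lemma MV.mvinf_one (z : A) : MVInf (mvneg 0) z = z := by
  show odot (mvneg 0) (oplus (mvneg (mvneg 0)) z) = z
  rw [mvneg_mvneg, MV.zero_oplus, MV.one_odot]

lemma MV.mvinf_zero (z : A) : MVInf (0 : A) z = 0 := by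
  show odot (0 : A) (oplus (mvneg 0) z) = 0
  rw [MV.zero_odot]

end Toolkit4
/-- The map `φ_A : a ↦ [(a),(0)]` is an isomorphism of MV-algebras from `A` onto
the unit interval `[0,u]` of the ℓ-group with strong unit `G_A` associated to
`A`, where `u = [(1),(0)]`: it lands in `[0,u]`, it is injective, it is
surjective onto `[0,u]`, and it preserves `0`, `¬` (i.e. `φ(¬a) = u - φ(a)`)
and `⊕` (i.e. `φ(a ⊕ b) = inf(u, φ(a) + φ(b))`). -/
theorem phi_iso (A : Type*) [MVAlgebra A] :
    (∀ a : A, PairLe ((zeroSeq A, zeroSeq A)) ((single a, zeroSeq A)) ∧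
      PairLe ((single a, zeroSeq A)) ((oneSeq A, zeroSeq A))) ∧
    (∀ a b : A,
      PairEq ((single a, zeroSeq A)) ((single b, zeroSeq A)) → a = b) ∧
    (∀ p : (ℕ → A) × (ℕ → A), Good p.1 → Good p.2 →
      PairLe ((zeroSeq A, zeroSeq A)) p → PairLe p ((oneSeq A, zeroSeq A)) →
      ∃ a : A, PairEq p ((single a, zeroSeq A))) ∧
    PairEq ((single (0 : A), zeroSeq A)) ((zeroSeq A, zeroSeq A)) ∧
    (∀ a : A, PairEq ((single (mvneg a), zeroSeq A))
      ((addGood (oneSeq A) (zeroSeq A), addGood (zeroSeq A) (single a)))) ∧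
    (∀ a b : A, PairEq ((single (oplus a b), zeroSeq A))
      (pairInf ((oneSeq A, zeroSeq A))
        (pairAdd ((single a, zeroSeq A)) ((single b, zeroSeq A))))) := by
  refine ⟨?_, ?_, ?_, ?_, ?_, ?_⟩
  · -- lands in [0,u]
    intro a
    constructor
    · intro i
      have g : MVLe (zeroSeq A i) (single a i) := MV.zero_le _
      rwa [← MV.addGood_zero_left (zeroSeq A) i, ← MV.addGood_zero_right (single a) i]
        at g
    · intro i
      have g : MVLe (single a i) (oneSeq A i) := by
        cases i with
        | zero => exact MV.le_one a
        | succ n => exact MV.le_refl _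
      rwa [← MV.addGood_zero_right (single a) i, ← MV.addGood_zero_right (oneSeq A) i]
        at g
  · -- injective
    intro a b h
    have h0 := congrFun (h : addGood (single a) (zeroSeq A) = addGood (single b) (zeroSeq A)) 0
    rwa [MV.addGood_zero_right, MV.addGood_zero_right] at h0
  · -- surjective onto [0,u]
    intro p hg1 hg2 h0 h1
    obtain ⟨hgx, -⟩ := hg1
    obtain ⟨hgy, N, hvan⟩ := hg2
    have hle : ∀ i, MVLe (p.2 i) (p.1 i) := by
      intro i
      have g := h0 i
      rwa [MV.addGood_zero_left, MV.addGood_zero_right] at g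
    have hle2 : ∀ n, MVLe (p.1 (n + 1)) (p.2 n) := by
      intro n
      have g := h1 (n + 1)
      rwa [MV.addGood_zero_right, MV.addGood_one_succ, hgy n] at g
    obtain ⟨a, ha0, ha⟩ := MV.key N p.1 p.2 hgx hgy hvan hle hle2
    refine ⟨a, ?_⟩
    show addGood p.1 (zeroSeq A) = addGood (single a) p.2
    funext n
    rw [MV.addGood_zero_right]
    cases n with
    | zero => rw [MV.addGood_single_zero]; exact ha0
    | succ m => rw [MV.addGood_single_succ]; exact ha m
  · -- preserves 0
    show addGood (single (0 : A)) (zeroSeq A) = addGood (zeroSeq A) (zeroSeq A)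
    funext n
    rw [MV.addGood_zero_right, MV.addGood_zero_left]
    cases n with
    | zero => rfl
    | succ m => rfl
  · -- preserves negation
    intro a
    show addGood (single (mvneg a)) (addGood (zeroSeq A) (single a))
        = addGood (addGood (oneSeq A) (zeroSeq A)) (zeroSeq A)
    have e1 : addGood (zeroSeq A) (single a) = single a :=
      funext (MV.addGood_zero_left (single a))
    rw [e1]
    funext n
    rw [MV.addGood_zero_right]
    cases n with
    | zero =>
      rw [MV.addGood_single_zero, MV.addGood_zero_right]
      exact MV.neg_oplus_self a
    | succ m =>
      rw [MV.addGood_single_succ, MV.addGood_zero_right]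
      cases m with
      | zero =>
        show oplus (odot (mvneg a) a) 0 = (0 : A)
        rw [MV.neg_odot_self, oplus_zero]
      | succ k =>
        show oplus (odot (mvneg a) 0) 0 = (0 : A)
        rw [MV.odot_zero, oplus_zero]
  · -- preserves ⊕
    intro a b
    show addGood (single (oplus a b)) (addGood (zeroSeq A) (addGood (zeroSeq A) (zeroSeq A)))
        = addGood (fun i => MVInf (addGood (oneSeq A) (addGood (zeroSeq A) (zeroSeq A)) i)
            (addGood (addGood (single a) (single b)) (zeroSeq A) i)) (zeroSeq A)
    have ez : addGood (zeroSeq A) (zeroSeq A) = zeroSeq A :=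
      funext (MV.addGood_zero_left (zeroSeq A))
    rw [ez]
    have ez2 : addGood (zeroSeq A) (zeroSeq A) = zeroSeq A :=
      funext (MV.addGood_zero_left (zeroSeq A))
    rw [ez2]
    funext n
    rw [MV.addGood_zero_right, MV.addGood_zero_right]
    have e3 : addGood (addGood (single a) (single b)) (zeroSeq A) n
        = addGood (single a) (single b) n := MV.addGood_zero_right _ n
    rw [e3]
    cases n with
    | zero =>
      rw [MV.addGood_single_zero, MV.addGood_one_zero]
      exact (MV.mvinf_one _).symm
    | succ m =>
      have h1 : addGood (oneSeq A) (zeroSeq A) (m + 1) = 0 := by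
        rw [MV.addGood_one_succ]
        show oplus (0 : A) 0 = 0
        rw [oplus_zero]
      rw [h1, MV.mvinf_zero]
      rfl
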